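/- Let H be a real Hilbert space, T : H → H monotone with zero z̄, ε : [t₀,∞) → (0,∞) continuously differentiable, and let z : [t₀,∞) → H be a continuously differentiable solution of ż(t) + T z(t) + ε(t) z(t) = 0. Then z is bounded on [t₀,∞) and ‖z(t) − z̄‖² ≤ e^{−ρ(t)}‖z(t₀) − z̄‖² + ‖z̄‖², where ρ(t) = ∫_{t₀}^t ε(τ)dτ. -/

import Mathlib

open Set

theorem stmt10 {H : Type*} [NormedAddCommGroup H] [InnerProductSpace ℝ H]
    (T : H → H)
    (hmono : ∀ u v : H, 0 ≤ (inner ℝ (T u - T v) (u - v) : ℝ))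
    (zbar : H) (hzbar : T zbar = 0)
    (t₀ : ℝ) (ε ε' : ℝ → ℝ)
    (hεpos : ∀ t ∈ Ici t₀, 0 < ε t)
    (hεderiv : ∀ t ∈ Ici t₀, HasDerivAt ε (ε' t) t)
    (hε'cont : ContinuousOn ε' (Ici t₀))
    (z z' : ℝ → H)
    (hz' : ∀ t ∈ Ici t₀, HasDerivAt z (z' t) t)
    (hz'cont : ContinuousOn z' (Ici t₀))
    (hflow : ∀ t ∈ Ici t₀, z' t + T (z t) + ε t • z t = 0) :
    (∃ C, ∀ t ∈ Ici t₀, ‖z t‖ ≤ C) ∧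
      ∀ t ∈ Ici t₀,
        ‖z t - zbar‖ ^ 2 ≤
          Real.exp (-(∫ τ in t₀..t, ε τ)) * ‖z t₀ - zbar‖ ^ 2 + ‖zbar‖ ^ 2 := by
  have hεcont : ContinuousOn ε (Ici t₀) := fun t ht =>
    (hεderiv t ht).continuousAt.continuousWithinAt
  have hzcont : ContinuousOn z (Ici t₀) := fun t ht =>
    (hz' t ht).continuousAt.continuousWithinAt
  have hεint : ∀ t ∈ Ici t₀, IntervalIntegrable ε MeasureTheory.volume t₀ t := by
    intro t ht
    apply ContinuousOn.intervalIntegrable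
    apply hεcont.mono
    rw [uIcc_of_le ht]
    exact Icc_subset_Ici_self
  set ρ : ℝ → ℝ := fun t => ∫ τ in t₀..t, ε τ with hρdef
  set c : ℝ := ‖zbar‖ ^ 2 with hcdef
  set h : ℝ → ℝ := fun t => (inner ℝ (z t - zbar) (z t - zbar) : ℝ) with hhdef
  have hhnorm : ∀ t, h t = ‖z t - zbar‖ ^ 2 := fun t =>
    real_inner_self_eq_norm_sq _
  set φ : ℝ → ℝ := fun t => Real.exp (ρ t) * (h t - c) with hφdef
  -- derivative of ρ within Ici t₀
  have hεcontIoi : ContinuousOn ε (Ioi t₀) := fun s hs =>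
    (hεderiv s (mem_Ici.mpr (le_of_lt hs))).continuousAt.continuousWithinAt
  have hεmeas : ∀ t ∈ Ioi t₀, StronglyMeasurableAtFilter ε (nhds t) MeasureTheory.volume :=
    hεcontIoi.stronglyMeasurableAtFilter isOpen_Ioi
  have hρd : ∀ t ∈ Ici t₀, HasDerivWithinAt ρ (ε t) (Ici t₀) t := by
    intro t ht
    rcases eq_or_lt_of_le (mem_Ici.mp ht) with rfl | hlt
    · exact intervalIntegral.integral_hasDerivWithinAt_right (hεint t₀ self_mem_Ici)
        ((hεcontIoi.stronglyMeasurableAtFilter_nhdsWithin measurableSet_Ioi t₀))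
        ((hεcont t₀ self_mem_Ici).mono Ioi_subset_Ici_self)
    · exact (intervalIntegral.integral_hasDerivAt_right (hεint t ht)
        (hεmeas t hlt) (hεderiv t ht).continuousAt).hasDerivWithinAt
  have hρcont : ContinuousOn ρ (Ici t₀) := fun t ht =>
    (hρd t ht).continuousWithinAt
  have hhcont : ContinuousOn h (Ici t₀) := by
    apply ContinuousOn.inner <;> exact hzcont.sub continuousOn_const
  have hφcont : ContinuousOn φ (Ici t₀) :=
    (Real.continuous_exp.comp_continuousOn hρcont).mul (hhcont.sub continuousOn_const)
  -- derivative of φ at interior points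
  have hφd : ∀ t ∈ interior (Ici t₀), HasDerivAt φ
      (Real.exp (ρ t) * (ε t * (h t - c) + 2 * (inner ℝ (z' t) (z t - zbar) : ℝ))) t := by
    intro t ht
    rw [interior_Ici] at ht
    have ht' : t ∈ Ici t₀ := mem_Ici.mpr (le_of_lt ht)
    have hρd' : HasDerivAt ρ (ε t) t :=
      intervalIntegral.integral_hasDerivAt_right (hεint t ht')
        (hεmeas t ht) (hεderiv t ht').continuousAt
    have hhd : HasDerivAt h (2 * (inner ℝ (z' t) (z t - zbar) : ℝ)) t := by
      have := ((hz' t ht').sub_const zbar).inner (𝕜 := ℝ) ((hz' t ht').sub_const zbar)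
      refine this.congr_deriv ?_
      rw [real_inner_comm]
      ring
    have := (hρd'.exp).mul (hhd.sub_const c)
    refine this.congr_deriv ?_
    ring
  -- the derivative is nonpositive
  have hφ'le : ∀ t ∈ interior (Ici t₀),
      Real.exp (ρ t) * (ε t * (h t - c) + 2 * (inner ℝ (z' t) (z t - zbar) : ℝ)) ≤ 0 := by
    intro t ht
    rw [interior_Ici] at ht
    have ht' : t ∈ Ici t₀ := mem_Ici.mpr (le_of_lt ht)
    have hz'eq : z' t = -(T (z t) + ε t • z t) := by
      apply eq_neg_of_add_eq_zero_left
      rw [← add_assoc]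
      exact hflow t ht'
    have hmon : 0 ≤ (inner ℝ (T (z t)) (z t - zbar) : ℝ) := by
      have := hmono (z t) zbar
      rwa [hzbar, sub_zero] at this
    have hinner : (inner ℝ (z' t) (z t - zbar) : ℝ) =
        -(inner ℝ (T (z t)) (z t - zbar) : ℝ) - ε t * (inner ℝ (z t) (z t - zbar) : ℝ) := by
      rw [hz'eq, inner_neg_left, inner_add_left, real_inner_smul_left]
      ring
    have key : h t - c - 2 * (inner ℝ (z t) (z t - zbar) : ℝ) = -(inner ℝ (z t) (z t) : ℝ) := by
      simp only [hhdef, hcdef, ← real_inner_self_eq_norm_sq, inner_sub_left, inner_sub_right]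
      rw [real_inner_comm zbar (z t)]
      ring
    have hself : 0 ≤ (inner ℝ (z t) (z t) : ℝ) := real_inner_self_nonneg
    have hε : 0 < ε t := hεpos t ht'
    have hexp : 0 ≤ Real.exp (ρ t) := (Real.exp_pos _).le
    have hterm : ε t * (h t - c) + 2 * (inner ℝ (z' t) (z t - zbar) : ℝ) ≤ 0 := by
      rw [hinner]
      nlinarith [key, hmon, hself, hε]
    exact mul_nonpos_of_nonneg_of_nonpos hexp hterm
  have hanti : AntitoneOn φ (Ici t₀) := by
    apply antitoneOn_of_deriv_nonpos (convex_Ici t₀) hφcont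
    · intro t ht
      exact (hφd t ht).differentiableAt.differentiableWithinAt
    · intro t ht
      rw [(hφd t ht).deriv]
      exact hφ'le t ht
  have hρ0 : ρ t₀ = 0 := intervalIntegral.integral_same
  -- main estimate
  have hmain : ∀ t ∈ Ici t₀,
      ‖z t - zbar‖ ^ 2 ≤ Real.exp (-(∫ τ in t₀..t, ε τ)) * ‖z t₀ - zbar‖ ^ 2 + ‖zbar‖ ^ 2 := by
    intro t ht
    have hφle : φ t ≤ φ t₀ := hanti self_mem_Ici ht ht
    rw [hφdef] at hφle
    simp only [hρ0, Real.exp_zero, one_mul] at hφle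
    -- exp (ρ t) * (h t - c) ≤ h t₀ - c
    have hE : Real.exp (-(ρ t)) * Real.exp (ρ t) = 1 := by
      rw [← Real.exp_add]; simp
    have h1 := mul_le_mul_of_nonneg_left hφle (Real.exp_pos (-(ρ t))).le
    have h0 : 0 ≤ h t₀ := real_inner_self_nonneg
    have hc0 : 0 ≤ c := by rw [hcdef]; positivity
    rw [← mul_assoc, hE, one_mul] at h1
    have h2 : Real.exp (-(ρ t)) * (h t₀ - c) ≤ Real.exp (-(ρ t)) * h t₀ :=
      mul_le_mul_of_nonneg_left (by linarith) (Real.exp_pos _).le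
    have hgoal : h t ≤ Real.exp (-(ρ t)) * h t₀ + c := by linarith
    rw [← hhnorm t, ← hhnorm t₀]
    exact hgoal
  refine ⟨⟨Real.sqrt (‖z t₀ - zbar‖ ^ 2 + ‖zbar‖ ^ 2) + ‖zbar‖, ?_⟩, hmain⟩
  intro t ht
  have hρnn : 0 ≤ ρ t := by
    apply intervalIntegral.integral_nonneg ht
    intro τ hτ
    exact (hεpos τ hτ.1).le
  have hexp1 : Real.exp (-(ρ t)) ≤ 1 := Real.exp_le_one_iff.mpr (by linarith)
  have hsq : ‖z t - zbar‖ ^ 2 ≤ ‖z t₀ - zbar‖ ^ 2 + ‖zbar‖ ^ 2 := by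
    have := hmain t ht
    nlinarith [sq_nonneg ‖z t₀ - zbar‖]
  have h4 : ‖z t - zbar‖ ≤ Real.sqrt (‖z t₀ - zbar‖ ^ 2 + ‖zbar‖ ^ 2) := by
    have := Real.sqrt_le_sqrt hsq
    rwa [Real.sqrt_sq (norm_nonneg _)] at this
  calc ‖z t‖ = ‖(z t - zbar) + zbar‖ := by simp
    _ ≤ ‖z t - zbar‖ + ‖zbar‖ := norm_add_le _ _
    _ ≤ Real.sqrt (‖z t₀ - zbar‖ ^ 2 + ‖zbar‖ ^ 2) + ‖zbar‖ := add_le_add_left h4 _
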